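/- arXiv:2311.14842 — 2 statements merged into one kernel-verified Lean document; each statement's English description precedes it below -/
import Mathlib

section
/- Let F be a finite field with q elements and let s, d, t be positive integers with s − dt ≥ 2 and dt ≥ 2. Suppose there exists a linear code C ⊆ F^n of dimension ℓ satisfying ℓ·s = n·(s − dt), together with a surjective labeling L : [n] → [s] such that every nonzero codeword of C has labelweight at least dt + 1. Then (s − dt) divides ℓ, the integer j := ℓ/(s − dt) satisfies n = js, and moreover q^j ≥ s − dt + 1 and q^j ≥ dt + 1. -/
open Classical in
/-- The labelweight of a vector `c` with respect to a labeling `L`: the number of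
distinct labels appearing on the support of `c`. -/
noncomputable def labelWeight {ι F : Type*} [Fintype ι] {s : ℕ} [Zero F]
    (L : ι → Fin s) (c : ι → F) : ℕ :=
  ((Finset.univ.filter fun i => c i ≠ 0).image L).card


lemma aux_count {V ι : Type*} [Fintype V] [DecidableEq V] (z : V) (J : Finset ι)
    (G : ι → Finset V) (hz : ∀ r ∈ J, z ∈ G r)
    (hdisj : ∀ r ∈ J, ∀ r' ∈ J, r ≠ r' → ∀ v ∈ G r, v ∈ G r' → v = z) :
    ∑ r ∈ J, ((G r).card - 1) ≤ Fintype.card V - 1 := by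
  classical
  have hd : ∀ r ∈ J, ∀ r' ∈ J, r ≠ r' → Disjoint ((G r).erase z) ((G r').erase z) := by
    intro r hr r' hr' hne
    refine Finset.disjoint_left.2 fun v hv hv' => ?_
    exact (Finset.ne_of_mem_erase hv)
      (hdisj r hr r' hr' hne v (Finset.mem_of_mem_erase hv) (Finset.mem_of_mem_erase hv'))
  calc ∑ r ∈ J, ((G r).card - 1) = ∑ r ∈ J, ((G r).erase z).card := by
        refine Finset.sum_congr rfl fun r hr => ?_
        rw [Finset.card_erase_of_mem (hz r hr)]
    _ = (J.biUnion fun r => (G r).erase z).card := (Finset.card_biUnion hd).symm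
    _ ≤ (Finset.univ.erase z).card := Finset.card_le_card (by
        intro v hv
        obtain ⟨r, hr, hvr⟩ := Finset.mem_biUnion.1 hv
        exact Finset.mem_erase.2 ⟨Finset.ne_of_mem_erase hvr, Finset.mem_univ v⟩)
    _ = Fintype.card V - 1 := by
        rw [Finset.card_erase_of_mem (Finset.mem_univ z), Finset.card_univ]

open Finset

lemma gen_bound {F : Type*} [Field F] [Fintype F] {q n s k j ℓ : ℕ}
    (hq : Fintype.card F = q) (hq2 : 2 ≤ q) (hj : 1 ≤ j) (hk1 : 1 ≤ k)
    (C : Submodule F (Fin n → F)) (hdim : Module.finrank F C = ℓ) (hlj : ℓ = k * j)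
    (L : Fin n → Fin s)
    (hfib : ∀ A : Finset (Fin s), (Finset.univ.filter fun i => L i ∈ A).card = A.card * j)
    (key : ∀ c ∈ C, ∀ A : Finset (Fin s), k ≤ A.card → (∀ i, L i ∈ A → c i = 0) → c = 0)
    (I : Finset (Fin s)) (Amap : Fin s → Finset (Fin s)) (b1 b2 : Fin s) (hb : b1 ≠ b2)
    (hA1 : ∀ r ∈ I, (Amap r).card = k - 1)
    (hAb1 : ∀ r ∈ I, b1 ∉ Amap r) (hAb2 : ∀ r ∈ I, b2 ∉ Amap r)
    (hAU : ∀ r ∈ I, ∀ r' ∈ I, r ≠ r' → (Amap r ∪ Amap r').card = k) :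
    I.card + 2 ≤ q ^ j + 1 := by
  classical
  set pB : Finset (Fin s) := {b1, b2} with hpB
  have hpBcard : pB.card = 2 := by
    rw [hpB, card_insert_of_notMem (by simp [hb]), card_singleton]
  let ι := {i : Fin n // L i ∈ pB}
  let V0 := ι → F
  have hcardι : Fintype.card ι = 2 * j := by
    rw [Fintype.card_subtype, hfib, hpBcard]
  have hrankV0 : Module.finrank F V0 = 2 * j := by
    rw [Module.finrank_fintype_fun_eq_card, hcardι]
  have hcardV0 : Fintype.card V0 = q ^ (2 * j) := by
    rw [Module.card_eq_pow_finrank (K := F) (V := V0), hq, hrankV0]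
  let ψ : C →ₗ[F] V0 := (LinearMap.funLeft F F (Subtype.val : ι → Fin n)).comp C.subtype
  have hψ : ∀ (c : C) (i : ι), ψ c i = (c : Fin n → F) i.val := fun _ _ => rfl
  -- the subcodes
  let KK : Fin s → Submodule F C := fun r =>
    LinearMap.ker ((LinearMap.funLeft F F
      (Subtype.val : {i : Fin n // L i ∈ Amap r} → Fin n)).comp C.subtype)
  have hKKmem : ∀ r (x : C), x ∈ KK r ↔ ∀ i : Fin n, L i ∈ Amap r → (x : Fin n → F) i = 0 := by
    intro r x
    constructor
    · intro h i hi
      have := congrFun (LinearMap.mem_ker.1 h) ⟨i, hi⟩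
      simpa using this
    · intro h
      refine LinearMap.mem_ker.2 (funext fun i => ?_)
      simpa using h i.1 i.2
  have hKKrank : ∀ r ∈ I, j ≤ Module.finrank F (KK r) := by
    intro r hr
    have h1 := LinearMap.finrank_range_add_finrank_ker ((LinearMap.funLeft F F
      (Subtype.val : {i : Fin n // L i ∈ Amap r} → Fin n)).comp C.subtype)
    rw [hdim] at h1
    have h2 : Module.finrank F (LinearMap.range ((LinearMap.funLeft F F
        (Subtype.val : {i : Fin n // L i ∈ Amap r} → Fin n)).comp C.subtype)) ≤ (k-1) * j := by
      refine le_trans (Submodule.finrank_le _) ?_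
      rw [Module.finrank_fintype_fun_eq_card, Fintype.card_subtype, hfib, hA1 r hr]
    have h3 : (k - 1) * j + j = ℓ := by
      rw [hlj]
      have hkk : k - 1 + 1 = k := by omega
      calc (k-1)*j + j = ((k-1)+1)*j := by ring
        _ = k*j := by rw [hkk]
    have h4 : Module.finrank F (KK r) = Module.finrank F (LinearMap.ker ((LinearMap.funLeft F F
        (Subtype.val : {i : Fin n // L i ∈ Amap r} → Fin n)).comp C.subtype)) := rfl
    rw [h4]
    omega
  have hKKcard : ∀ r ∈ I, q ^ j ≤ Fintype.card (KK r) := by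
    intro r hr
    rw [Module.card_eq_pow_finrank (K := F) (V := KK r), hq]
    exact Nat.pow_le_pow_right (by omega) (hKKrank r hr)
  let Wfin : Fin s → Finset V0 := fun r => Finset.image (fun x : KK r => ψ (x : C)) Finset.univ
  have hWinj : ∀ r ∈ I, Function.Injective (fun x : KK r => ψ (x : C)) := by
    intro r hr x y hxy
    have hc : ((x : C) : Fin n → F) - ((y : C) : Fin n → F) ∈ C := sub_mem (x : C).2 (y : C).2
    have hAcard : k ≤ (Amap r ∪ pB).card := by
      have hdisj : Disjoint (Amap r) pB := by
        rw [Finset.disjoint_right]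
        intro a ha
        rcases Finset.mem_insert.1 ha with rfl | ha'
        · exact hAb1 r hr
        · rw [Finset.mem_singleton.1 ha']; exact hAb2 r hr
      rw [card_union_of_disjoint hdisj, hA1 r hr, hpBcard]; omega
    have h0 : ((x : C) : Fin n → F) - ((y : C) : Fin n → F) = 0 := by
      refine key _ hc (Amap r ∪ pB) hAcard fun i hi => ?_
      rcases Finset.mem_union.1 hi with h | h
      · have hx := (hKKmem r _).1 x.2 i h
        have hy := (hKKmem r _).1 y.2 i h
        simp [hx, hy]
      · have := congrFun hxy (⟨i, h⟩ : ι)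
        simp only [hψ] at this
        simp [this]
    have hxy2 : ((x : C) : Fin n → F) = ((y : C) : Fin n → F) := sub_eq_zero.1 h0
    exact Subtype.ext (Subtype.ext hxy2)
  have hWcard : ∀ r ∈ I, q ^ j ≤ (Wfin r).card := by
    intro r hr
    rw [Finset.card_image_of_injective _ (hWinj r hr), Finset.card_univ]
    exact hKKcard r hr
  -- the two "coordinate" subspaces
  let M : Fin s → Submodule F V0 := fun b =>
    LinearMap.ker (LinearMap.funLeft F F (Subtype.val : {i : ι // L (i : Fin n) = b} → ι))
  have hMmem : ∀ b (f : V0), f ∈ M b ↔ ∀ i : ι, L (i : Fin n) = b → f i = 0 := by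
    intro b f
    constructor
    · intro h i hi
      have := congrFun (LinearMap.mem_ker.1 h) ⟨i, hi⟩
      exact this
    · intro h
      refine LinearMap.mem_ker.2 (funext fun i => ?_)
      exact h i.1 i.2
  have hcard_sub : ∀ b ∈ pB, Fintype.card {i : ι // L (i : Fin n) = b} = j := by
    intro b hbmem
    have e : {i : ι // L (i : Fin n) = b} ≃ {i : Fin n // L i = b} :=
      { toFun := fun x => ⟨x.1.1, x.2⟩
        invFun := fun y => ⟨⟨y.1, by rw [y.2]; exact hbmem⟩, y.2⟩
        left_inv := fun x => Subtype.ext (Subtype.ext rfl)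
        right_inv := fun y => rfl }
    rw [Fintype.card_congr e, Fintype.card_subtype]
    have h := hfib {b}
    simpa using h
  have hUrank : ∀ b ∈ pB, j ≤ Module.finrank F (M b) := by
    intro b hbmem
    have h1 := LinearMap.finrank_range_add_finrank_ker
      (LinearMap.funLeft F F (Subtype.val : {i : ι // L (i : Fin n) = b} → ι) : V0 →ₗ[F] _)
    rw [hrankV0] at h1
    have h2 : Module.finrank F (LinearMap.range
        (LinearMap.funLeft F F (Subtype.val : {i : ι // L (i : Fin n) = b} → ι) : V0 →ₗ[F] _)) ≤ j := by
      refine le_trans (Submodule.finrank_le _) ?_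
      rw [Module.finrank_fintype_fun_eq_card, hcard_sub b hbmem]
    have h4 : Module.finrank F (M b) = Module.finrank F (LinearMap.ker
        (LinearMap.funLeft F F (Subtype.val : {i : ι // L (i : Fin n) = b} → ι) : V0 →ₗ[F] _)) := rfl
    rw [h4]
    omega
  let Ufin : Fin s → Finset V0 := fun b => Finset.univ.filter fun f : V0 => f ∈ M b
  have hUcard : ∀ b ∈ pB, q ^ j ≤ (Ufin b).card := by
    intro b hbmem
    have : (Ufin b).card = Fintype.card (M b) := (Fintype.card_subtype _).symm
    rw [this, Module.card_eq_pow_finrank (K := F) (V := M b), hq]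
    exact Nat.pow_le_pow_right (by omega) (hUrank b hbmem)
  -- disjointness
  have dWU : ∀ r ∈ I, ∀ b ∈ pB, ∀ v ∈ Wfin r, v ∈ Ufin b → v = 0 := by
    intro r hr b hbmem v hv hvU
    obtain ⟨x, -, hx⟩ := Finset.mem_image.1 hv
    have hvM : v ∈ M b := (Finset.mem_filter.1 hvU).2
    have hbA : b ∉ Amap r := by
      rcases Finset.mem_insert.1 hbmem with rfl | h
      · exact hAb1 r hr
      · rw [Finset.mem_singleton.1 h]; exact hAb2 r hr
    have hcard : k ≤ (insert b (Amap r)).card := by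
      rw [Finset.card_insert_of_notMem hbA, hA1 r hr]; omega
    have h0 : (((x : C) : Fin n → F)) = 0 := by
      refine key _ (x : C).2 (insert b (Amap r)) hcard fun i hi => ?_
      rcases Finset.mem_insert.1 hi with hbe | h
      · have hiι : L i ∈ pB := hbe ▸ hbmem
        have := (hMmem b v).1 hvM ⟨i, hiι⟩ hbe
        rw [← hx] at this
        simpa [hψ] using this
      · exact (hKKmem r _).1 x.2 i h
    have : (x : C) = 0 := Subtype.ext h0
    rw [← hx, this, map_zero]
  have dWW : ∀ r ∈ I, ∀ r' ∈ I, r ≠ r' → ∀ v ∈ Wfin r, v ∈ Wfin r' → v = 0 := by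
    intro r hr r' hr' hne v hv hv'
    obtain ⟨x, -, hx⟩ := Finset.mem_image.1 hv
    obtain ⟨x', -, hx'⟩ := Finset.mem_image.1 hv'
    have hinter : (Amap r ∩ Amap r').card + 2 = k := by
      have h := Finset.card_union_add_card_inter (Amap r) (Amap r')
      rw [hAU r hr r' hr' hne, hA1 r hr, hA1 r' hr'] at h
      omega
    have hdisj2 : Disjoint (Amap r ∩ Amap r') pB := by
      rw [Finset.disjoint_right]
      intro a ha
      rcases Finset.mem_insert.1 ha with rfl | ha'
      · exact fun hmem => hAb1 r hr (Finset.mem_inter.1 hmem).1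
      · rw [Finset.mem_singleton.1 ha']
        exact fun hmem => hAb2 r hr (Finset.mem_inter.1 hmem).1
    have hcard1 : k ≤ ((Amap r ∩ Amap r') ∪ pB).card := by
      rw [card_union_of_disjoint hdisj2, hpBcard]; omega
    have heq : ((x : C) : Fin n → F) = (((x' : C) : Fin n → F)) := by
      have hc : ((x : C) : Fin n → F) - ((x' : C) : Fin n → F) ∈ C := sub_mem (x : C).2 (x' : C).2
      refine sub_eq_zero.1 (key _ hc ((Amap r ∩ Amap r') ∪ pB) hcard1 fun i hi => ?_)
      rcases Finset.mem_union.1 hi with h | h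
      · have hxv := (hKKmem r _).1 x.2 i (Finset.mem_inter.1 h).1
        have hx'v := (hKKmem r' _).1 x'.2 i (Finset.mem_inter.1 h).2
        simp [hxv, hx'v]
      · have h1 := congrFun hx (⟨i, h⟩ : ι)
        have h2 := congrFun hx' (⟨i, h⟩ : ι)
        rw [← h2] at h1
        simp only [hψ] at h1
        simp [h1]
    have hcard2 : k ≤ (Amap r ∪ Amap r').card := le_of_eq (hAU r hr r' hr' hne).symm
    have h0 : ((x : C) : Fin n → F) = 0 := by
      refine key _ (x : C).2 (Amap r ∪ Amap r') hcard2 fun i hi => ?_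
      rcases Finset.mem_union.1 hi with h | h
      · exact (hKKmem r _).1 x.2 i h
      · rw [heq]; exact (hKKmem r' _).1 x'.2 i h
    have : (x : C) = 0 := Subtype.ext h0
    rw [← hx, this, map_zero]
  have dUU : ∀ v ∈ Ufin b1, v ∈ Ufin b2 → v = 0 := by
    intro v hv1 hv2
    have h1 : v ∈ M b1 := (Finset.mem_filter.1 hv1).2
    have h2 : v ∈ M b2 := (Finset.mem_filter.1 hv2).2
    funext i
    rcases Finset.mem_insert.1 i.2 with h | h
    · exact (hMmem b1 v).1 h1 i h
    · exact (hMmem b2 v).1 h2 i (Finset.mem_singleton.1 h)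
  -- assemble
  let G : Fin s ⊕ Bool → Finset V0 := Sum.elim Wfin (fun c => if c then Ufin b1 else Ufin b2)
  let J : Finset (Fin s ⊕ Bool) := I.disjSum Finset.univ
  have hJcard : J.card = I.card + 2 := by
    rw [Finset.card_disjSum, Finset.card_univ, Fintype.card_bool]
  have hmemJ : ∀ x ∈ J, (∃ r ∈ I, x = Sum.inl r) ∨ x = Sum.inr true ∨ x = Sum.inr false := by
    intro x hx
    rcases x with r | c
    · exact Or.inl ⟨r, Finset.inl_mem_disjSum.1 hx, rfl⟩
    · rcases c with _ | _
      · exact Or.inr (Or.inr rfl)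
      · exact Or.inr (Or.inl rfl)
  have hzG : ∀ x ∈ J, (0 : V0) ∈ G x := by
    intro x hx
    rcases x with r | c
    · exact Finset.mem_image.2 ⟨0, Finset.mem_univ _, by simp⟩
    · rcases c with _ | _ <;>
      · simp only [G, Sum.elim_inr]
        simp only [if_true, if_false, Ufin]
        exact Finset.mem_filter.2 ⟨Finset.mem_univ _, (M _).zero_mem⟩
  have hb1pB : b1 ∈ pB := Finset.mem_insert_self _ _
  have hb2pB : b2 ∈ pB := Finset.mem_insert.2 (Or.inr (Finset.mem_singleton_self _))
  have hdisjG : ∀ x ∈ J, ∀ y ∈ J, x ≠ y → ∀ v ∈ G x, v ∈ G y → v = 0 := by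
    intro x hx y hy hne v hvx hvy
    rcases x with r | c <;> rcases y with r' | c'
    · have hrI : r ∈ I := Finset.inl_mem_disjSum.1 hx
      have hr'I : r' ∈ I := Finset.inl_mem_disjSum.1 hy
      exact dWW r hrI r' hr'I (by intro h; exact hne (by rw [h])) v hvx hvy
    · have hrI : r ∈ I := Finset.inl_mem_disjSum.1 hx
      rcases c' with _ | _
      · exact dWU r hrI b2 hb2pB v hvx (by simpa [G] using hvy)
      · exact dWU r hrI b1 hb1pB v hvx (by simpa [G] using hvy)
    · have hrI : r' ∈ I := Finset.inl_mem_disjSum.1 hy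
      rcases c with _ | _
      · exact dWU r' hrI b2 hb2pB v hvy (by simpa [G] using hvx)
      · exact dWU r' hrI b1 hb1pB v hvy (by simpa [G] using hvx)
    · rcases c with _ | _ <;> rcases c' with _ | _
      · exact absurd rfl hne
      · exact dUU v (by simpa [G] using hvy) (by simpa [G] using hvx)
      · exact dUU v (by simpa [G] using hvx) (by simpa [G] using hvy)
      · exact absurd rfl hne
  have hsum := aux_count (0 : V0) J G hzG hdisjG
  have hGcard : ∀ x ∈ J, q ^ j - 1 ≤ (G x).card - 1 := by
    intro x hx
    have : q ^ j ≤ (G x).card := by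
      rcases x with r | c
      · exact hWcard r (Finset.inl_mem_disjSum.1 hx)
      · rcases c with _ | _
        · simpa [G] using hUcard b2 hb2pB
        · simpa [G] using hUcard b1 hb1pB
    omega
  have hlow : (I.card + 2) * (q ^ j - 1) ≤ ∑ x ∈ J, ((G x).card - 1) := by
    have := Finset.card_nsmul_le_sum J (fun x => (G x).card - 1) (q ^ j - 1) hGcard
    rwa [smul_eq_mul, hJcard] at this
  have hfinal : (I.card + 2) * (q ^ j - 1) ≤ q ^ (2*j) - 1 := by
    calc (I.card + 2) * (q ^ j - 1) ≤ ∑ x ∈ J, ((G x).card - 1) := hlow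
      _ ≤ Fintype.card V0 - 1 := hsum
      _ = q ^ (2*j) - 1 := by rw [hcardV0]
  have ha2 : 2 ≤ q ^ j := le_trans hq2 (Nat.le_self_pow (by omega) q)
  obtain ⟨b0, hb0⟩ : ∃ b0, q ^ j = b0 + 2 := ⟨q ^ j - 2, by omega⟩
  have hsq : q ^ (2*j) = (q ^ j) * (q ^ j) := by rw [two_mul, pow_add]
  rw [hb0, hsq, hb0] at hfinal
  have hpoly : (b0+2)*(b0+2) - 1 = (b0+3)*(b0+1) := by
    have h1 : (b0+2)*(b0+2) = b0*b0 + 4*b0 + 4 := by ring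
    have h2 : (b0+3)*(b0+1) = b0*b0 + 4*b0 + 3 := by ring
    omega
  rw [hpoly] at hfinal
  have : (I.card + 2) * (b0+1) ≤ (b0+3)*(b0+1) := by simpa using hfinal
  have := Nat.le_of_mul_le_mul_right this (by omega : 0 < b0 + 1)
  rw [hb0]
  omega


/-- Let F be a finite field with q elements and s, d, t positive
integers with s − dt ≥ 2 and dt ≥ 2.  Suppose there is a linear code C ⊆ F^n of
dimension ℓ with ℓ·s = n·(s − dt) and a surjective labeling L : [n] → [s] under which
every nonzero codeword of C has labelweight at least dt + 1.  Then (s − dt) divides ℓ,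
the integer j := ℓ/(s − dt) satisfies n = js, and q^j ≥ s − dt + 1 and q^j ≥ dt + 1. -/
theorem stmt_17 {F : Type*} [Field F] [Fintype F] {q n s d t ℓ : ℕ}
    (hq : Fintype.card F = q)
    (hs : 0 < s) (hd : 0 < d) (ht : 0 < t)
    (hsdt : 2 ≤ s - d * t) (hdt : 2 ≤ d * t)
    (C : Submodule F (Fin n → F)) (hdim : Module.finrank F C = ℓ)
    (hrate : ℓ * s = n * (s - d * t))
    (L : Fin n → Fin s) (hL : Function.Surjective L)
    (hwt : ∀ c ∈ C, c ≠ 0 → d * t + 1 ≤ labelWeight L c) :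
    (s - d * t) ∣ ℓ ∧ n = (ℓ / (s - d * t)) * s ∧
      s - d * t + 1 ≤ q ^ (ℓ / (s - d * t)) ∧
      d * t + 1 ≤ q ^ (ℓ / (s - d * t)) := by
  classical
  set k := s - d * t with hk
  have hq2 : 2 ≤ q := by rw [← hq]; exact Fintype.one_lt_card
  have hdts : d * t + 2 ≤ s := by omega
  have hks : k ≤ s := by omega
  have hk1 : 1 ≤ k := by omega
  set m : Fin s → ℕ := fun a => (Finset.univ.filter fun i => L i = a).card with hm
  have nA_eq : ∀ A : Finset (Fin s),
      (Finset.univ.filter fun i => L i ∈ A).card = ∑ a ∈ A, m a := by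
    intro A
    rw [Finset.card_eq_sum_card_fiberwise (f := L) (t := A)
      (s := Finset.univ.filter fun i => L i ∈ A)
      (fun i hi => (Finset.mem_filter.1 (Finset.mem_coe.1 hi)).2)]
    refine Finset.sum_congr rfl fun a ha => ?_
    congr 1
    ext i
    simp only [Finset.mem_filter, Finset.mem_univ, true_and]
    constructor
    · rintro ⟨_, h2⟩; exact h2
    · intro h2; exact ⟨h2 ▸ ha, h2⟩
  -- key vanishing lemma
  have key : ∀ c ∈ C, ∀ A : Finset (Fin s), k ≤ A.card →
      (∀ i, L i ∈ A → c i = 0) → c = 0 := by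
    intro c hc A hA hvan
    by_contra hc0
    have h1 := hwt c hc hc0
    have h2 : labelWeight L c ≤ Aᶜ.card := by
      unfold labelWeight
      apply Finset.card_le_card
      intro a ha
      obtain ⟨i, hi, rfl⟩ := Finset.mem_image.1 ha
      have hine : c i ≠ 0 := (Finset.mem_filter.1 hi).2
      rw [Finset.mem_compl]
      exact fun hmem => hine (hvan i hmem)
    rw [Finset.card_compl, Fintype.card_fin] at h2
    omega
  -- lower bound on coordinate counts
  have hle : ∀ A : Finset (Fin s), k ≤ A.card →
      ℓ ≤ (Finset.univ.filter fun i => L i ∈ A).card := by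
    intro A hA
    have hinj : Function.Injective ((LinearMap.funLeft F F
        (Subtype.val : {i : Fin n // L i ∈ A} → Fin n)).comp C.subtype) := by
      intro x y hxy
      have hc : ((x : Fin n → F)) - (y : Fin n → F) ∈ C := sub_mem x.2 y.2
      have h0 : ((x : Fin n → F)) - (y : Fin n → F) = 0 := by
        refine key _ hc A hA fun i hi => ?_
        have := congrFun hxy (⟨i, hi⟩ : {i : Fin n // L i ∈ A})
        simpa [sub_eq_zero] using this
      exact Subtype.ext (sub_eq_zero.1 h0)
    have h := LinearMap.finrank_le_finrank_of_injective hinj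
    rwa [hdim, Module.finrank_fintype_fun_eq_card, Fintype.card_subtype] at h
  -- averaging
  set P := Finset.powersetCard k (Finset.univ : Finset (Fin s)) with hP
  have hPcard : P.card = Nat.choose s k := by
    rw [hP, Finset.card_powersetCard, Finset.card_univ, Fintype.card_fin]
  have hcount : ∀ a : Fin s, (P.filter fun A => a ∈ A).card = Nat.choose (s-1) (k-1) := by
    intro a
    have hnot : P.filter (fun A => a ∉ A) = Finset.powersetCard k (Finset.univ.erase a) := by
      ext A
      simp only [Finset.mem_filter, hP, Finset.mem_powersetCard, Finset.subset_erase]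
      constructor
      · rintro ⟨⟨h1, h2⟩, h3⟩; exact ⟨⟨h1, h3⟩, h2⟩
      · rintro ⟨⟨h1, h3⟩, h2⟩; exact ⟨⟨h1, h2⟩, h3⟩
    have hnotcard : (P.filter fun A => a ∉ A).card = Nat.choose (s-1) k := by
      rw [hnot, Finset.card_powersetCard, Finset.card_erase_of_mem (Finset.mem_univ a),
        Finset.card_univ, Fintype.card_fin]
    have hsplit := Finset.card_filter_add_card_filter_not (s := P)
      (p := fun A => a ∈ A)
    have hpascal : Nat.choose s k = Nat.choose (s-1) (k-1) + Nat.choose (s-1) k := by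
      have h := Nat.choose_succ_succ (s-1) (k-1)
      simp only [Nat.succ_eq_add_one] at h
      rw [show s - 1 + 1 = s from by omega, show k - 1 + 1 = k from by omega] at h
      exact h
    omega
  have hsum_fib : ∑ a : Fin s, m a = n := by
    have := Finset.card_eq_sum_card_fiberwise (f := L) (s := (Finset.univ : Finset (Fin n)))
      (t := (Finset.univ : Finset (Fin s))) (fun i _ => Finset.mem_univ _)
    rw [Finset.card_univ, Fintype.card_fin] at this
    exact this.symm
  have hswap : ∑ A ∈ P, (Finset.univ.filter fun i => L i ∈ A).card
      = n * Nat.choose (s-1) (k-1) := by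
    have e1 : ∀ A ∈ P, (Finset.univ.filter fun i => L i ∈ A).card
        = ∑ a : Fin s, if a ∈ A then m a else 0 := by
      intro A _
      rw [nA_eq, Finset.sum_ite_mem, Finset.univ_inter]
    rw [Finset.sum_congr rfl e1, Finset.sum_comm]
    have e2 : ∀ a : Fin s, (∑ A ∈ P, if a ∈ A then m a else 0)
        = Nat.choose (s-1) (k-1) * m a := by
      intro a
      rw [Finset.sum_ite, Finset.sum_const_zero, add_zero, Finset.sum_const, smul_eq_mul,
        hcount a]
    rw [Finset.sum_congr rfl fun a _ => e2 a, ← Finset.mul_sum, hsum_fib, mul_comm]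
  have hmulid : ℓ * Nat.choose s k = n * Nat.choose (s-1) (k-1) := by
    have h := Nat.add_one_mul_choose_eq (s-1) (k-1)
    rw [show s - 1 + 1 = s from by omega, show k - 1 + 1 = k from by omega] at h
    -- h : s * choose (s-1) (k-1) = choose s k * k
    have hmul : (ℓ * Nat.choose s k) * k = (n * Nat.choose (s-1) (k-1)) * k := by
      calc (ℓ * Nat.choose s k) * k = ℓ * (Nat.choose s k * k) := by ring
        _ = ℓ * (s * Nat.choose (s-1) (k-1)) := by rw [h]
        _ = (ℓ * s) * Nat.choose (s-1) (k-1) := by ring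
        _ = (n * k) * Nat.choose (s-1) (k-1) := by rw [hrate]
        _ = (n * Nat.choose (s-1) (k-1)) * k := by ring
    exact Nat.eq_of_mul_eq_mul_right (by omega) hmul
  have havg : ∀ A ∈ P, (Finset.univ.filter fun i => L i ∈ A).card = ℓ := by
    by_contra hcon
    push_neg at hcon
    obtain ⟨A0, hA0, hne⟩ := hcon
    have hA0k : A0.card = k := (Finset.mem_powersetCard.1 hA0).2
    have hlt : ℓ < (Finset.univ.filter fun i => L i ∈ A0).card :=
      lt_of_le_of_ne (hle A0 (le_of_eq hA0k.symm)) (Ne.symm hne)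
    have hstrict : ∑ _A ∈ P, ℓ < ∑ A ∈ P, (Finset.univ.filter fun i => L i ∈ A).card :=
      Finset.sum_lt_sum (fun A hA => hle A (le_of_eq ((Finset.mem_powersetCard.1 hA).2).symm))
        ⟨A0, hA0, hlt⟩
    rw [Finset.sum_const, smul_eq_mul, hswap, hPcard, ← hmulid, mul_comm] at hstrict
    omega
  -- equal fibers
  have hfib_eq : ∀ a b : Fin s, m a = m b := by
    intro a b
    rcases eq_or_ne a b with rfl | hab
    · rfl
    obtain ⟨T', hT'sub, hT'card⟩ := Finset.exists_subset_card_eq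
      (s := (Finset.univ.erase a).erase b) (n := k-1) (by
        rw [Finset.card_erase_of_mem (Finset.mem_erase.2 ⟨hab.symm, Finset.mem_univ b⟩),
          Finset.card_erase_of_mem (Finset.mem_univ a), Finset.card_univ, Fintype.card_fin]
        omega)
    have haT' : a ∉ T' := fun h =>
      (Finset.mem_erase.1 (Finset.mem_of_mem_erase (hT'sub h))).1 rfl
    have hbT' : b ∉ T' := fun h => (Finset.mem_erase.1 (hT'sub h)).1 rfl
    have hmemP : ∀ x : Fin s, x ∉ T' → insert x T' ∈ P := by
      intro x hx
      rw [hP, Finset.mem_powersetCard]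
      exact ⟨Finset.subset_univ _, by rw [Finset.card_insert_of_notMem hx, hT'card]; omega⟩
    have ha' := havg (insert a T') (hmemP a haT')
    have hb' := havg (insert b T') (hmemP b hbT')
    rw [nA_eq, Finset.sum_insert haT'] at ha'
    rw [nA_eq, Finset.sum_insert hbT'] at hb'
    omega
  set a₀ : Fin s := ⟨0, hs⟩ with ha₀
  set j := m a₀ with hj
  have hfib : ∀ A : Finset (Fin s),
      (Finset.univ.filter fun i => L i ∈ A).card = A.card * j := by
    intro A
    rw [nA_eq]
    calc ∑ a ∈ A, m a = ∑ _a ∈ A, j := Finset.sum_congr rfl fun a _ => hfib_eq a a₀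
      _ = A.card * j := by rw [Finset.sum_const, smul_eq_mul]
  have hnj : n = s * j := by
    rw [← hsum_fib]
    calc ∑ a : Fin s, m a = ∑ _a : Fin s, j := Finset.sum_congr rfl fun a _ => hfib_eq a a₀
      _ = s * j := by rw [Finset.sum_const, smul_eq_mul, Finset.card_univ, Fintype.card_fin]
  have hlj : ℓ = k * j := by
    obtain ⟨T, -, hTcard⟩ := Finset.exists_subset_card_eq
      (s := (Finset.univ : Finset (Fin s))) (n := k) (by
        rw [Finset.card_univ, Fintype.card_fin]; exact hks)
    have hTP : T ∈ P := by
      rw [hP, Finset.mem_powersetCard]; exact ⟨Finset.subset_univ _, hTcard⟩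
    have := havg T hTP
    rw [hfib, hTcard] at this
    omega
  have hj1 : 1 ≤ j := by
    obtain ⟨i, hi⟩ := hL a₀
    have : i ∈ Finset.univ.filter fun i => L i = a₀ := Finset.mem_filter.2 ⟨Finset.mem_univ _, hi⟩
    rw [hj]
    exact Finset.card_pos.2 ⟨i, this⟩
  have hdvd : k ∣ ℓ := ⟨j, hlj⟩
  have hdiv : ℓ / k = j := by rw [hlj]; exact Nat.mul_div_cancel_left j (by omega)
  refine ⟨hdvd, ?_, ?_, ?_⟩
  · rw [hdiv, hnj, mul_comm]
  · -- s - d*t + 1 ≤ q ^ j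
    rw [hdiv]
    obtain ⟨T, -, hTcard⟩ := Finset.exists_subset_card_eq
      (s := (Finset.univ : Finset (Fin s))) (n := k) (by
        rw [Finset.card_univ, Fintype.card_fin]; exact hks)
    have hcompl : 2 ≤ Tᶜ.card := by
      rw [Finset.card_compl, Fintype.card_fin, hTcard]; omega
    obtain ⟨b1, hb1, b2, hb2, hbne⟩ := Finset.one_lt_card.1 hcompl
    have hbound := gen_bound hq hq2 hj1 hk1 C hdim hlj L hfib key T
      (fun a => T.erase a) b1 b2 hbne
      (fun r hr => by rw [Finset.card_erase_of_mem hr, hTcard])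
      (fun r _ => fun h => (Finset.mem_compl.1 hb1) (Finset.mem_of_mem_erase h))
      (fun r _ => fun h => (Finset.mem_compl.1 hb2) (Finset.mem_of_mem_erase h))
      (fun r hr r' hr' hne => by
        have : T.erase r ∪ T.erase r' = T := by
          ext x
          simp only [Finset.mem_union, Finset.mem_erase]
          constructor
          · rintro (⟨_, h⟩ | ⟨_, h⟩) <;> exact h
          · intro hx
            rcases eq_or_ne x r with rfl | hxr
            · exact Or.inr ⟨hne, hx⟩
            · exact Or.inl ⟨hxr, hx⟩
        rw [this, hTcard])
    rw [hTcard] at hbound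
    omega
  · -- d*t + 1 ≤ q ^ j
    rw [hdiv]
    obtain ⟨T, -, hTcard⟩ := Finset.exists_subset_card_eq
      (s := (Finset.univ : Finset (Fin s))) (n := k) (by
        rw [Finset.card_univ, Fintype.card_fin]; exact hks)
    obtain ⟨a1, ha1, a2, ha2, hane⟩ := Finset.one_lt_card.1 (by omega : 1 < T.card)
    set Z := (T.erase a1).erase a2 with hZ
    have hZcard : Z.card = k - 2 := by
      rw [hZ, Finset.card_erase_of_mem (Finset.mem_erase.2 ⟨hane.symm, ha2⟩),
        Finset.card_erase_of_mem ha1, hTcard]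
      omega
    have hZsub : Z ⊆ T := fun x hx => Finset.mem_of_mem_erase (Finset.mem_of_mem_erase hx)
    have ha1Z : a1 ∉ Z := fun h => (Finset.mem_erase.1 (Finset.mem_of_mem_erase h)).1 rfl
    have ha2Z : a2 ∉ Z := fun h => (Finset.mem_erase.1 h).1 rfl
    have hbound := gen_bound hq hq2 hj1 hk1 C hdim hlj L hfib key Tᶜ
      (fun b => insert b Z) a1 a2 hane
      (fun r hr => by
        have hrZ : r ∉ Z := fun h => (Finset.mem_compl.1 hr) (hZsub h)
        rw [Finset.card_insert_of_notMem hrZ, hZcard]; omega)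
      (fun r hr h => by
        rcases Finset.mem_insert.1 h with h' | h'
        · exact (Finset.mem_compl.1 hr) (h' ▸ ha1)
        · exact ha1Z h')
      (fun r hr h => by
        rcases Finset.mem_insert.1 h with h' | h'
        · exact (Finset.mem_compl.1 hr) (h' ▸ ha2)
        · exact ha2Z h')
      (fun r hr r' hr' hne => by
        have hrZ : r ∉ Z := fun h => (Finset.mem_compl.1 hr) (hZsub h)
        have hr'Z : r' ∉ Z := fun h => (Finset.mem_compl.1 hr') (hZsub h)
        have : insert r Z ∪ insert r' Z = insert r (insert r' Z) := by
          ext x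
          simp only [Finset.mem_union, Finset.mem_insert]
          tauto
        rw [this, Finset.card_insert_of_notMem (by
            rw [Finset.mem_insert]; push_neg; exact ⟨hne, hrZ⟩),
          Finset.card_insert_of_notMem hr'Z, hZcard]
        omega)
    have hTc : Tᶜ.card = d * t := by
      rw [Finset.card_compl, Fintype.card_fin, hTcard]; omega
    rw [hTc] at hbound
    omega
end

section
/- Let F be a finite field with Q elements and let s, d, t be positive integers with s > dt and s − dt ≤ Q. Suppose either s ≤ Q + 1, or Q is even, s − dt ∈ {3, Q − 1}, and s ≤ Q + 2. Then there exists a totally nonsingular matrix A ∈ F^{(s−dt) × dt}, all of whose entries are nonzero. -/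
/-- A matrix is totally nonsingular if every square submatrix (given by injections
selecting rows and columns) is nonsingular. -/
def IsTotallyNonsingular {F : Type*} [Field F] {r u : ℕ}
    (A : Matrix (Fin r) (Fin u) F) : Prop :=
  ∀ (k : ℕ), 1 ≤ k → ∀ (ρ : Fin k → Fin r) (σ : Fin k → Fin u),
    Function.Injective ρ → Function.Injective σ →
      (Matrix.of fun p q : Fin k => A (ρ p) (σ q)).det ≠ 0

section Helpers
open scoped Matrix
open Polynomial

variable {F : Type*} [Field F]


variable {F : Type*} [Field F]

lemma tns_of_family {r u : ℕ} (A : Matrix (Fin r) (Fin u) F)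
    (H : ∀ τ : Fin r → Fin r ⊕ Fin u, Function.Injective τ →
      (Matrix.of fun p q : Fin r =>
        Sum.elim (fun i => (Pi.single i 1 : Fin r → F)) (fun j => fun p => A p j) (τ q) p).det ≠ 0) :
    IsTotallyNonsingular A := by
  classical
  intro k hk ρ σ hρ hσ hdet
  obtain ⟨v, hv0, hvM⟩ := Matrix.exists_mulVec_eq_zero_iff.mpr hdet
  set w : Fin r → F := fun i => ∑ q, A i (σ q) * v q with hw
  have hwρ : ∀ p, w (ρ p) = 0 := by
    intro p
    simpa [Matrix.mulVec, dotProduct, hw] using congrFun hvM p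
  have hkr : k ≤ r := by
    simpa using Fintype.card_le_of_injective ρ hρ
  let e : Fin k ⊕ Fin (r - k) ≃ Fin r :=
    finSumFinEquiv.trans (finCongr (Nat.add_sub_cancel' hkr))
  let T : Finset (Fin r) := (Finset.univ.image ρ)ᶜ
  have hTcard : T.card = r - k := by
    simp [T, Finset.card_compl, Finset.card_image_of_injective _ hρ]
  let ρ' : Fin (r - k) → Fin r := fun m => (T.equivFin.symm (Fin.cast hTcard.symm m)).1
  have hρ'inj : Function.Injective ρ' := by
    intro x y hxy
    have := T.equivFin.symm.injective (Subtype.ext hxy)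
    simpa [Fin.ext_iff] using congrArg Fin.val this
  have hρ'mem : ∀ m, ρ' m ∈ T := fun m => (T.equivFin.symm _).2
  have hρ'ne : ∀ m p, ρ' m ≠ ρ p := by
    intro m p h
    have := hρ'mem m
    rw [h] at this
    simp [T] at this
  have hcover : ∀ p : Fin r, (¬ ∃ p₀, ρ p₀ = p) → ∃ m, ρ' m = p := by
    intro p hp
    have hpT : p ∈ T := by simp [T]; intro x h; exact hp ⟨x, h⟩
    refine ⟨Fin.cast hTcard (T.equivFin ⟨p, hpT⟩), ?_⟩
    simp [ρ']
  let τ : Fin r → Fin r ⊕ Fin u := fun j =>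
    Sum.elim (fun q => Sum.inr (σ q)) (fun m => Sum.inl (ρ' m)) (e.symm j)
  have hτ : Function.Injective τ := by
    intro x y hxy
    apply e.symm.injective
    rcases hx : e.symm x with q1 | m1 <;> rcases hy : e.symm y with q2 | m2 <;>
      simp [τ, hx, hy] at hxy
    · rw [hσ hxy]
    · rw [hρ'inj hxy]
  apply H τ hτ
  rw [← Matrix.exists_mulVec_eq_zero_iff]
  refine ⟨fun j => Sum.elim v (fun m => -(w (ρ' m))) (e.symm j), ?_, ?_⟩
  · obtain ⟨q, hq⟩ := Function.ne_iff.mp hv0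
    intro hzero
    have := congrFun hzero (e (Sum.inl q))
    simp at this
    exact hq this
  · funext p
    have hsum : ∀ f : Fin r → F, ∑ j, f j = ∑ x : Fin k ⊕ Fin (r - k), f (e x) :=
      fun f => (Equiv.sum_comp e f).symm
    simp only [Matrix.mulVec, dotProduct, Matrix.of_apply, Pi.zero_apply]
    rw [hsum]
    rw [Fintype.sum_sum_type]
    have h1 : ∀ q : Fin k, (Sum.elim (fun i => (Pi.single i 1 : Fin r → F)) (fun j => fun p => A p j) (τ (e (Sum.inl q))) p) * (Sum.elim v (fun m => -(w (ρ' m))) (e.symm (e (Sum.inl q)))) = A p (σ q) * v q := by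
      intro q; simp [τ]
    have h2 : ∀ m : Fin (r - k), (Sum.elim (fun i => (Pi.single i 1 : Fin r → F)) (fun j => fun p => A p j) (τ (e (Sum.inr m))) p) * (Sum.elim v (fun m => -(w (ρ' m))) (e.symm (e (Sum.inr m)))) = (if p = ρ' m then (1:F) else 0) * (-(w (ρ' m))) := by
      intro m; simp [τ, Pi.single_apply]
    simp only [h1, h2]
    by_cases hp : ∃ p₀, ρ p₀ = p
    · obtain ⟨p₀, rfl⟩ := hp
      have : ∀ m, (if ρ p₀ = ρ' m then (1:F) else 0) * (-(w (ρ' m))) = 0 := by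
        intro m
        rw [if_neg (fun h => hρ'ne m p₀ h.symm), zero_mul]
      simp only [this, Finset.sum_const_zero, add_zero]
      simpa [hw] using hwρ p₀
    · obtain ⟨m₀, rfl⟩ := hcover p hp
      rw [Finset.sum_eq_single m₀]
      · simp [hw]
      · intro m _ hm
        rw [if_neg (fun h => hm (hρ'inj h.symm)), zero_mul]
      · simp

variable {F : Type*} [Field F]


lemma tns_entries_ne_zero {r u : ℕ} (A : Matrix (Fin r) (Fin u) F)
    (h : IsTotallyNonsingular A) : ∀ i k, A i k ≠ 0 := by
  intro i k h0
  apply h 1 le_rfl (fun _ => i) (fun _ => k)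
    (Function.injective_of_subsingleton _) (Function.injective_of_subsingleton _)
  rw [Matrix.det_fin_one]
  exact h0

lemma tns_transpose {r u : ℕ} {A : Matrix (Fin r) (Fin u) F}
    (h : IsTotallyNonsingular A) : IsTotallyNonsingular Aᵀ := by
  intro k hk ρ σ hρ hσ
  have h2 := h k hk σ ρ hσ hρ
  rw [← Matrix.det_transpose] at h2
  convert h2 using 2
  rfl

lemma exists_tns_of_cols {r u : ℕ} (g : Fin r ⊕ Fin u → Fin r → F)
    (H : ∀ τ : Fin r → Fin r ⊕ Fin u, Function.Injective τ →
      (Matrix.of fun p q : Fin r => g (τ q) p).det ≠ 0) :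
    ∃ A : Matrix (Fin r) (Fin u) F, IsTotallyNonsingular A ∧ ∀ i k, A i k ≠ 0 := by
  classical
  set B : Matrix (Fin r) (Fin r) F := Matrix.of fun p i => g (Sum.inl i) p with hB
  have hBdet : B.det ≠ 0 := H Sum.inl Sum.inl_injective
  have hBunit : IsUnit B.det := isUnit_iff_ne_zero.mpr hBdet
  set A : Matrix (Fin r) (Fin u) F := Matrix.of fun i j => (B⁻¹ *ᵥ g (Sum.inr j)) i with hA
  have key : ∀ j : Fin r ⊕ Fin u,
      Sum.elim (fun i => (Pi.single i 1 : Fin r → F)) (fun j => fun p => A p j) j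
        = B⁻¹ *ᵥ g j := by
    rintro (i | j)
    · have h1 : g (Sum.inl i) = B *ᵥ Pi.single i 1 := by
        funext p
        simp [Matrix.mulVec, dotProduct, Pi.single_apply, mul_ite, hB]
      rw [Sum.elim_inl, h1, Matrix.mulVec_mulVec, Matrix.nonsing_inv_mul _ hBunit,
        Matrix.one_mulVec]
    · funext p
      simp [hA]
  have hTNS : IsTotallyNonsingular A := by
    apply tns_of_family
    intro τ hτ
    have heq : (Matrix.of fun p q : Fin r =>
        Sum.elim (fun i => (Pi.single i 1 : Fin r → F)) (fun j => fun p => A p j) (τ q) p)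
          = B⁻¹ * Matrix.of fun p q : Fin r => g (τ q) p := by
      ext p q
      simp only [Matrix.of_apply, Matrix.mul_apply]
      rw [congrFun (key (τ q)) p]
      simp [Matrix.mulVec, dotProduct]
    rw [heq, Matrix.det_mul]
    refine mul_ne_zero ?_ (H τ hτ)
    rw [Matrix.det_nonsing_inv, Ring.inverse_eq_inv']
    exact inv_ne_zero hBdet
  exact ⟨A, hTNS, tns_entries_ne_zero A hTNS⟩

variable {F : Type*} [Field F]

/-- column of the (extended) Vandermonde family -/
def vcol (r : ℕ) (o : Option F) : Fin r → F :=
  fun p => o.elim (if (p : ℕ) = r - 1 then 1 else 0) (fun a => a ^ (p : ℕ))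

lemma vcol_det {r : ℕ} (hr : 1 ≤ r) (τ : Fin r → Option F)
    (hτ : Function.Injective τ) :
    (Matrix.of fun p q : Fin r => vcol r (τ q) p).det ≠ 0 := by
  classical
  intro h0
  obtain ⟨v, hv0, hv⟩ := Matrix.exists_vecMul_eq_zero_iff.mpr h0
  have hvq : ∀ q, ∑ p : Fin r, v p * vcol r (τ q) p = 0 := by
    intro q
    simpa [Matrix.vecMul, dotProduct] using congrFun hv q
  set P : F[X] := ∑ p : Fin r, C (v p) * X ^ (p : ℕ) with hP
  have hcoeff : ∀ p : Fin r, P.coeff (p : ℕ) = v p := by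
    intro p
    rw [hP, finset_sum_coeff, Finset.sum_eq_single p]
    · simp
    · intro b _ hb
      have hbp : ((p : ℕ) = (b : ℕ)) = False := by
        simp only [eq_iff_iff, iff_false]
        exact fun h => hb (Fin.ext h.symm)
      simp [coeff_C_mul, coeff_X_pow, hbp]
    · simp
  have hdeg : P.natDegree ≤ r - 1 := by
    apply natDegree_sum_le_of_forall_le
    intro p _
    refine (natDegree_C_mul_le _ _).trans ?_
    simpa using Nat.le_sub_one_of_lt p.isLt
  have heval : ∀ (q : Fin r) (a : F), τ q = some a → P.eval a = 0 := by
    intro q a hqa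
    have h := hvq q
    rw [hqa] at h
    rw [hP, eval_finset_sum]
    simpa [vcol] using h
  have hPne : P ≠ 0 := by
    intro h
    apply hv0
    funext p
    simp only [Pi.zero_apply]
    rw [← hcoeff p, h, coeff_zero]
  by_cases hnone : ∃ q₀, τ q₀ = none
  · obtain ⟨q₀, hq₀⟩ := hnone
    have hlast : v ⟨r - 1, by omega⟩ = 0 := by
      have h := hvq q₀
      rw [hq₀, Finset.sum_eq_single (⟨r - 1, by omega⟩ : Fin r)] at h
      · simpa [vcol] using h
      · intro b _ hb
        have : ((b : ℕ) = r - 1) = False := by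
          simp only [eq_iff_iff, iff_false]
          exact fun h' => hb (Fin.ext h')
        simp [vcol, this]
      · simp
    rcases Nat.lt_or_ge r 2 with hr2 | hr2
    · apply hv0
      funext p
      have hp : p = ⟨r - 1, by omega⟩ := by
        apply Fin.ext
        omega
      rw [hp]
      exact hlast
    · have hdeg2 : P.natDegree ≤ r - 2 := by
        rw [natDegree_le_iff_coeff_eq_zero]
        intro m hm
        rcases Nat.lt_or_ge m r with h | h
        · have hm1 : (⟨m, h⟩ : Fin r) = ⟨r - 1, by omega⟩ := by
            apply Fin.ext
            simp
            omega
          have := hcoeff ⟨m, h⟩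
          rw [hm1] at this
          simp only [] at this
          rw [show m = r - 1 by omega] at this ⊢
          rw [this]
          exact hlast
        · exact coeff_eq_zero_of_natDegree_lt (lt_of_le_of_lt hdeg (by omega))
      have hne : ∀ q : Fin r, q ≠ q₀ → τ q ≠ none := by
        intro q hq hn
        exact hq (hτ (hn.trans hq₀.symm))
      have hP0 : P = 0 := by
        apply P.eq_zero_of_natDegree_lt_card_of_eval_eq_zero
          (f := fun q : {q : Fin r // q ≠ q₀} =>
            (τ q.1).get (Option.ne_none_iff_isSome.mp (hne q.1 q.2)))
        · intro x y hxy
          have hx := (Option.some_get (Option.ne_none_iff_isSome.mp (hne x.1 x.2))).symm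
          have hy := (Option.some_get (Option.ne_none_iff_isSome.mp (hne y.1 y.2))).symm
          have : τ x.1 = τ y.1 := by rw [hx, hy]; exact congrArg some hxy
          exact Subtype.ext (hτ this)
        · intro q
          exact heval q.1 _ (Option.some_get (Option.ne_none_iff_isSome.mp (hne q.1 q.2))).symm
        · have hcard : Fintype.card {q : Fin r // q ≠ q₀} = r - 1 := by
            simp [Fintype.card_subtype_compl]
          rw [hcard]
          omega
      exact hPne hP0
  · push_neg at hnone
    have hP0 : P = 0 := by
      apply P.eq_zero_of_natDegree_lt_card_of_eval_eq_zero
        (f := fun q : Fin r => (τ q).get (Option.ne_none_iff_isSome.mp (hnone q)))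
      · intro x y hxy
        have hx := (Option.some_get (Option.ne_none_iff_isSome.mp (hnone x))).symm
        have hy := (Option.some_get (Option.ne_none_iff_isSome.mp (hnone y))).symm
        exact hτ (by rw [hx, hy]; exact congrArg some hxy)
      · intro q
        exact heval q _ (Option.some_get (Option.ne_none_iff_isSome.mp (hnone q))).symm
      · simpa using lt_of_le_of_lt hdeg (by omega : r - 1 < r)
    exact hPne hP0

variable {F : Type*} [Field F]

/-- column of the hyperoval family -/
def hcol : Option (Option F) → Fin 3 → F
  | none => ![0, 1, 0]
  | some none => ![0, 0, 1]
  | some (some a) => ![1, a, a ^ 2]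

lemma solve3 {a b c v0 v1 v2 : F} (hab : a ≠ b) (hac : a ≠ c) (hbc : b ≠ c)
    (ea : v0 + v1 * a + v2 * a ^ 2 = 0) (eb : v0 + v1 * b + v2 * b ^ 2 = 0)
    (ec : v0 + v1 * c + v2 * c ^ 2 = 0) : v0 = 0 ∧ v1 = 0 ∧ v2 = 0 := by
  have h1 : (a - b) * (v1 + v2 * (a + b)) = 0 := by linear_combination ea - eb
  have h2 : (a - c) * (v1 + v2 * (a + c)) = 0 := by linear_combination ea - ec
  have h1' : v1 + v2 * (a + b) = 0 :=
    (mul_eq_zero.mp h1).resolve_left (sub_ne_zero.mpr hab)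
  have h2' : v1 + v2 * (a + c) = 0 :=
    (mul_eq_zero.mp h2).resolve_left (sub_ne_zero.mpr hac)
  have h3 : (b - c) * v2 = 0 := by linear_combination h1' - h2'
  have hv2 : v2 = 0 := (mul_eq_zero.mp h3).resolve_left (sub_ne_zero.mpr hbc)
  have hv1 : v1 = 0 := by linear_combination h1' - (a + b) * hv2
  have hv0 : v0 = 0 := by linear_combination ea - a * hv1 - a ^ 2 * hv2
  exact ⟨hv0, hv1, hv2⟩

lemma solveN (hsq : ∀ a b : F, a ^ 2 = b ^ 2 → a = b) {a b v0 v1 v2 : F} (hab : a ≠ b)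
    (h1 : v1 = 0)
    (ea : v0 + v1 * a + v2 * a ^ 2 = 0) (eb : v0 + v1 * b + v2 * b ^ 2 = 0) :
    v0 = 0 ∧ v1 = 0 ∧ v2 = 0 := by
  have h3 : v2 * (a ^ 2 - b ^ 2) = 0 := by linear_combination ea - eb - (a - b) * h1
  have hv2 : v2 = 0 := by
    rcases mul_eq_zero.mp h3 with h | h
    · exact h
    · exact absurd (hsq a b (by linear_combination h)) hab
  have hv0 : v0 = 0 := by linear_combination ea - a * h1 - a ^ 2 * hv2
  exact ⟨hv0, h1, hv2⟩

lemma solveSN {a b v0 v1 v2 : F} (hab : a ≠ b) (h2 : v2 = 0)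
    (ea : v0 + v1 * a + v2 * a ^ 2 = 0) (eb : v0 + v1 * b + v2 * b ^ 2 = 0) :
    v0 = 0 ∧ v1 = 0 ∧ v2 = 0 := by
  have h3 : (a - b) * v1 = 0 := by linear_combination ea - eb - (a ^ 2 - b ^ 2) * h2
  have hv1 : v1 = 0 := (mul_eq_zero.mp h3).resolve_left (sub_ne_zero.mpr hab)
  have hv0 : v0 = 0 := by linear_combination ea - a * hv1 - a ^ 2 * h2
  exact ⟨hv0, hv1, h2⟩

lemma solve1 {a v0 v1 v2 : F} (h1 : v1 = 0) (h2 : v2 = 0)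
    (ea : v0 + v1 * a + v2 * a ^ 2 = 0) : v0 = 0 ∧ v1 = 0 ∧ v2 = 0 :=
  ⟨by linear_combination ea - a * h1 - a ^ 2 * h2, h1, h2⟩

lemma hcol_det (hsq : ∀ a b : F, a ^ 2 = b ^ 2 → a = b)
    (τ : Fin 3 → Option (Option F)) (hτ : Function.Injective τ) :
    (Matrix.of fun p q : Fin 3 => hcol (τ q) p).det ≠ 0 := by
  classical
  intro h0
  obtain ⟨v, hv0, hv⟩ := Matrix.exists_vecMul_eq_zero_iff.mpr h0
  have hvq : ∀ q, v 0 * hcol (τ q) 0 + v 1 * hcol (τ q) 1 + v 2 * hcol (τ q) 2 = 0 := by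
    intro q
    have := congrFun hv q
    simpa [Matrix.vecMul, dotProduct, Fin.sum_univ_three] using this
  have key : v 0 = 0 ∧ v 1 = 0 ∧ v 2 = 0 := by
    have E0 := hvq 0
    have E1 := hvq 1
    have E2 := hvq 2
    have ne01 : (0 : Fin 3) ≠ 1 := by decide
    have ne02 : (0 : Fin 3) ≠ 2 := by decide
    have ne12 : (1 : Fin 3) ≠ 2 := by decide
    rcases h0' : τ 0 with _ | _ | a <;> rcases h1' : τ 1 with _ | _ | b <;>
        rcases h2' : τ 2 with _ | _ | c <;>
      rw [h0'] at E0 <;> rw [h1'] at E1 <;> rw [h2'] at E2 <;>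
      simp only [hcol, Matrix.cons_val_zero, Matrix.cons_val_one, Matrix.head_cons,
        Matrix.cons_val_two, Matrix.tail_cons, mul_zero, mul_one, zero_add, add_zero] at E0 E1 E2
    -- now 27 goals
    all_goals first
      | exact absurd (hτ (h0'.trans h1'.symm)) ne01
      | exact absurd (hτ (h0'.trans h2'.symm)) ne02
      | exact absurd (hτ (h1'.trans h2'.symm)) ne12
      | exact solve3 (fun h => ne01 (hτ (by rw [h0', h1', h])))
          (fun h => ne02 (hτ (by rw [h0', h2', h])))
          (fun h => ne12 (hτ (by rw [h1', h2', h]))) E0 E1 E2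
      | exact solveN hsq (fun h => ne12 (hτ (by rw [h1', h2', h]))) E0 E1 E2
      | exact solveN hsq (fun h => ne02 (hτ (by rw [h0', h2', h]))) E1 E0 E2
      | exact solveN hsq (fun h => ne01 (hτ (by rw [h0', h1', h]))) E2 E0 E1
      | exact solveSN (fun h => ne12 (hτ (by rw [h1', h2', h]))) E0 E1 E2
      | exact solveSN (fun h => ne02 (hτ (by rw [h0', h2', h]))) E1 E0 E2
      | exact solveSN (fun h => ne01 (hτ (by rw [h0', h1', h]))) E2 E0 E1
      | exact solve1 E1 E2 E0
      | exact solve1 E2 E1 E0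
      | exact solve1 E0 E2 E1
      | exact solve1 E2 E0 E1
      | exact solve1 E0 E1 E2
      | exact solve1 E1 E0 E2
  apply hv0
  funext p
  fin_cases p
  · exact key.1
  · exact key.2.1
  · exact key.2.2

lemma exists_tns_caseA [Fintype F] {r u : ℕ} (hr : 1 ≤ r)
    (hru : r + u ≤ Fintype.card F + 1) :
    ∃ A : Matrix (Fin r) (Fin u) F, IsTotallyNonsingular A ∧ ∀ i k, A i k ≠ 0 := by
  have hcard : Fintype.card (Fin r ⊕ Fin u) ≤ Fintype.card (Option F) := by
    simp only [Fintype.card_sum, Fintype.card_fin, Fintype.card_option]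
    omega
  obtain ⟨ι⟩ := Function.Embedding.nonempty_of_card_le hcard
  exact exists_tns_of_cols (fun j => vcol r (ι j))
    (fun τ hτ => vcol_det hr (fun q => ι (τ q)) (ι.injective.comp hτ))

lemma exists_tns_caseB [Fintype F] (hsq : ∀ a b : F, a ^ 2 = b ^ 2 → a = b) {u : ℕ}
    (hu : 3 + u ≤ Fintype.card F + 2) :
    ∃ A : Matrix (Fin 3) (Fin u) F, IsTotallyNonsingular A ∧ ∀ i k, A i k ≠ 0 := by
  have hcard : Fintype.card (Fin 3 ⊕ Fin u) ≤ Fintype.card (Option (Option F)) := by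
    simp only [Fintype.card_sum, Fintype.card_fin, Fintype.card_option]
    omega
  obtain ⟨ι⟩ := Function.Embedding.nonempty_of_card_le hcard
  exact exists_tns_of_cols (fun j => hcol (ι j))
    (fun τ hτ => hcol_det hsq (fun q => ι (τ q)) (ι.injective.comp hτ))

end Helpers

/-- Let F be a finite field with Q elements and s, d, t positive
integers with s > dt and s − dt ≤ Q.  Suppose either s ≤ Q + 1, or Q is even,
s − dt ∈ {3, Q − 1}, and s ≤ Q + 2.  Then there exists a totally nonsingular matrix
A ∈ F^{(s−dt) × dt}, all of whose entries are nonzero. -/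
theorem stmt_18 {F : Type*} [Field F] [Fintype F] {Q s d t : ℕ}
    (hQ : Fintype.card F = Q)
    (hs : 0 < s) (hd : 0 < d) (ht : 0 < t) (hst : d * t < s)
    (hsdtQ : s - d * t ≤ Q)
    (hcond : s ≤ Q + 1 ∨
      (Even Q ∧ (s - d * t = 3 ∨ s - d * t = Q - 1) ∧ s ≤ Q + 2)) :
    ∃ A : Matrix (Fin (s - d * t)) (Fin (d * t)) F,
      IsTotallyNonsingular A ∧ ∀ i k, A i k ≠ 0 := by
  have hr1 : 1 ≤ s - d * t := by omega
  by_cases hA : s ≤ Q + 1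
  · exact exists_tns_caseA hr1 (by rw [hQ]; omega)
  · obtain ⟨hEven, hor, hs2⟩ := hcond.resolve_left hA
    have hsQ2 : s = Q + 2 := by omega
    have hQ2 : 2 ≤ Q := by
      rw [← hQ]
      exact Fintype.one_lt_card
    have hchar : ringChar F = 2 := by
      apply FiniteField.even_card_iff_char_two.mpr
      rw [hQ]
      exact Nat.even_iff.mp hEven
    haveI : Fact (Nat.Prime 2) := ⟨Nat.prime_two⟩
    haveI : CharP F 2 := by rw [← hchar]; exact ringChar.charP F
    have hsq : ∀ a b : F, a ^ 2 = b ^ 2 → a = b := by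
      intro a b h
      apply frobenius_inj F 2
      simpa [frobenius_def] using h
    rcases hor with h3 | hQ1
    · have hu : d * t = Q - 1 := by omega
      rw [h3, hu]
      exact exists_tns_caseB hsq (by rw [hQ]; omega)
    · have hu : d * t = 3 := by omega
      rw [hQ1, hu]
      obtain ⟨A, hA1, hA2⟩ := exists_tns_caseB (F := F) hsq (u := Q - 1) (by rw [hQ]; omega)
      exact ⟨A.transpose, tns_transpose hA1, fun i k => hA2 k i⟩
end
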